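/- Let U, V : ℝ^R → ℝ be differentiable, σ-strongly concave functions with bijective gradients, and suppose ‖∇U(x) - ∇V(x)‖ ≤ α for all x ∈ ℝ^R. Then for every p ∈ ℝ^R, ‖(∇U)⁻¹(p) - (∇V)⁻¹(p)‖ ≤ α/σ. -/
import Mathlib


open RealInnerProductSpace

theorem inverse_gradients_close_of_gradients_close
    {R : ℕ} (σ α : ℝ) (hσ : 0 < σ) (hα : 0 ≤ α)
    (U V : EuclideanSpace ℝ (Fin R) → ℝ)
    (hUdiff : Differentiable ℝ U) (hVdiff : Differentiable ℝ V)
    (hUconc : ∀ x y, -⟪gradient U x - gradient U y, x - y⟫ ≥ σ * ‖x - y‖ ^ 2)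
    (hVconc : ∀ x y, -⟪gradient V x - gradient V y, x - y⟫ ≥ σ * ‖x - y‖ ^ 2)
    (hUbij : Function.Bijective (gradient U))
    (hVbij : Function.Bijective (gradient V))
    (GU GV : EuclideanSpace ℝ (Fin R) → EuclideanSpace ℝ (Fin R))
    (hGU : ∀ p, gradient U (GU p) = p) (hGV : ∀ p, gradient V (GV p) = p)
    (hclose : ∀ x, ‖gradient U x - gradient V x‖ ≤ α) :
    ∀ p : EuclideanSpace ℝ (Fin R), ‖GU p - GV p‖ ≤ α / σ := by
  intro p
  set x := GU p with hx
  set y := GV p with hy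
  have key : σ * ‖x - y‖ ^ 2 ≤ α * ‖x - y‖ := by
    have h1 := hUconc x y
    have h2 : gradient U x - gradient U y = gradient V y - gradient U y := by
      rw [hGU, hGV]
    rw [h2] at h1
    have h3 : -⟪gradient V y - gradient U y, x - y⟫ =
        ⟪gradient U y - gradient V y, x - y⟫ := by
      rw [← inner_neg_left]; congr 1; abel
    rw [h3] at h1
    calc σ * ‖x - y‖ ^ 2 ≤ ⟪gradient U y - gradient V y, x - y⟫ := h1
      _ ≤ ‖gradient U y - gradient V y‖ * ‖x - y‖ := real_inner_le_norm _ _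
      _ ≤ α * ‖x - y‖ := by
          exact mul_le_mul_of_nonneg_right (hclose y) (norm_nonneg _)
  rcases eq_or_lt_of_le (norm_nonneg (x - y)) with h | h
  · rw [← h]; positivity
  · rw [le_div_iff₀ hσ]
    have : σ * ‖x - y‖ * ‖x - y‖ ≤ α * ‖x - y‖ := by nlinarith [key]
    nlinarith [this, h]
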